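/- Let C ≥ 0 and let d : [0,∞) → ℝ satisfy the following two conditions: (i) whenever 0 ≤ t ≤ s, d(t) > 0 and C(s−t) < d(t)², then d(s) ≥ √(d(t)² − C(s−t)); (ii) whenever 0 ≤ t ≤ s, d(t) < 0 and C(s−t) < d(t)², then d(s) ≤ −√(d(t)² − C(s−t)). Then d admits a finite right limit lim_{s↓t} d(s) at every t ≥ 0, and a finite left limit lim_{s↑t} d(s) at every t > 0. -/

import Mathlib

open Filter Topology

/-- A real function on `[0,∞)` satisfying the two square-root lower/upper persistence
bounds admits finite one-sided limits at every point. -/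
theorem statement15 (C : ℝ) (hC : 0 ≤ C) (d : ℝ → ℝ)
    (h1 : ∀ t s : ℝ, 0 ≤ t → t ≤ s → 0 < d t → C * (s - t) < (d t) ^ 2 →
      Real.sqrt ((d t) ^ 2 - C * (s - t)) ≤ d s)
    (h2 : ∀ t s : ℝ, 0 ≤ t → t ≤ s → d t < 0 → C * (s - t) < (d t) ^ 2 →
      d s ≤ -Real.sqrt ((d t) ^ 2 - C * (s - t))) :
    (∀ t : ℝ, 0 ≤ t → ∃ L : ℝ, Tendsto d (nhdsWithin t (Set.Ioi t)) (nhds L)) ∧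
    (∀ t : ℝ, 0 < t → ∃ L : ℝ, Tendsto d (nhdsWithin t (Set.Ico 0 t)) (nhds L)) := by
  -- generic monotonicity lemma
  have key : ∀ e : ℝ → ℝ,
      (∀ t s : ℝ, 0 ≤ t → t ≤ s → 0 < e t → C * (s - t) < (e t) ^ 2 →
        Real.sqrt ((e t) ^ 2 - C * (s - t)) ≤ e s) →
      Monotone (fun s => max (e (max s 0)) 0 ^ 2 + C * max s 0) := by
    intro e he u s hus
    dsimp only
    set u' := max u 0 with hu'
    set s' := max s 0 with hs'
    have h0u : (0:ℝ) ≤ u' := le_max_right _ _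
    have hus' : u' ≤ s' := max_le_max hus le_rfl
    have hCus : C * u' ≤ C * s' := mul_le_mul_of_nonneg_left hus' hC
    rcases le_or_gt (e u') 0 with h | h
    · rw [max_eq_right h]
      nlinarith [sq_nonneg (max (e s') 0)]
    · rcases lt_or_ge (C * (s' - u')) ((e u') ^ 2) with hlt | hge
      · have hsq := he u' s' h0u hus' h hlt
        have hes : 0 ≤ e s' := le_trans (Real.sqrt_nonneg _) hsq
        have hsq2 : (e u') ^ 2 - C * (s' - u') ≤ (e s') ^ 2 := by
          have h0 : (0:ℝ) ≤ (e u') ^ 2 - C * (s' - u') := by linarith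
          have := Real.sq_sqrt h0
          nlinarith [Real.sqrt_nonneg ((e u') ^ 2 - C * (s' - u'))]
        rw [max_eq_left h.le, max_eq_left hes]
        linarith
      · rw [max_eq_left h.le]
        nlinarith [sq_nonneg (max (e s') 0)]
  have he2 : ∀ t s : ℝ, 0 ≤ t → t ≤ s → 0 < -(d t) → C * (s - t) < (-(d t)) ^ 2 →
      Real.sqrt ((-(d t)) ^ 2 - C * (s - t)) ≤ -(d s) := by
    intro t s ht hts hdt hlt
    rw [neg_sq] at hlt ⊢
    have := h2 t s ht hts (by linarith) hlt
    linarith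
  set F : ℝ → ℝ := fun s => max (d (max s 0)) 0 ^ 2 + C * max s 0 with hF
  set G : ℝ → ℝ := fun s => max (-(d (max s 0))) 0 ^ 2 + C * max s 0 with hG
  have hFmono : Monotone F := key d h1
  have hGmono : Monotone G := key (fun s => -(d s)) he2
  -- identity recovering d from F and G
  have hid : ∀ s : ℝ, 0 ≤ s →
      d s = Real.sqrt (F s - C * s) - Real.sqrt (G s - C * s) := by
    intro s hs
    have hms : max s 0 = s := max_eq_left hs
    simp only [hF, hG, hms]
    have : ∀ x : ℝ, x ^ 2 + C * s - C * s = x ^ 2 := by intro x; ring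
    rw [this, this, Real.sqrt_sq (le_max_right _ _), Real.sqrt_sq (le_max_right _ _)]
    rcases le_total 0 (d s) with h | h
    · rw [max_eq_left h, max_eq_right (by linarith)]; ring
    · rw [max_eq_right h, max_eq_left (by linarith)]; ring
  -- a general limit-assembly step
  have assemble : ∀ (t : ℝ) (l : Filter ℝ) (A B : ℝ),
      Tendsto F l (nhds A) → Tendsto G l (nhds B) →
      Tendsto (fun s : ℝ => C * s) l (nhds (C * t)) →
      (∀ᶠ s in l, 0 ≤ s) →
      Tendsto d l (nhds (Real.sqrt (A - C * t) - Real.sqrt (B - C * t))) := by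
    intro t l A B hA hB hCt hpos
    have h1' : Tendsto (fun s => Real.sqrt (F s - C * s) - Real.sqrt (G s - C * s)) l
        (nhds (Real.sqrt (A - C * t) - Real.sqrt (B - C * t))) := by
      exact ((Real.continuous_sqrt.tendsto _).comp (hA.sub hCt)).sub
        ((Real.continuous_sqrt.tendsto _).comp (hB.sub hCt))
    refine h1'.congr' ?_ |>.mono_left le_rfl
    filter_upwards [hpos] with s hs
    exact (hid s hs).symm
  constructor
  · intro t ht
    refine ⟨Real.sqrt (sInf (F '' Set.Ioi t) - C * t) -
      Real.sqrt (sInf (G '' Set.Ioi t) - C * t), ?_⟩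
    refine assemble t _ _ _ (hFmono.tendsto_nhdsGT t)
      (hGmono.tendsto_nhdsGT t)
      (((continuous_const.mul continuous_id).tendsto t).mono_left nhdsWithin_le_nhds) ?_
    filter_upwards [eventually_mem_nhdsWithin] with s hs
    exact le_of_lt (lt_of_le_of_lt ht hs)
  · intro t ht
    have hmono : nhdsWithin t (Set.Ico 0 t) ≤ nhdsWithin t (Set.Iio t) :=
      nhdsWithin_mono t (Set.Ico_subset_Iio_self)
    refine ⟨Real.sqrt (sSup (F '' Set.Iio t) - C * t) -
      Real.sqrt (sSup (G '' Set.Iio t) - C * t), ?_⟩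
    refine assemble t _ _ _ ((hFmono.tendsto_nhdsLT t).mono_left hmono)
      ((hGmono.tendsto_nhdsLT t).mono_left hmono)
      (((continuous_const.mul continuous_id).tendsto t).mono_left nhdsWithin_le_nhds) ?_
    filter_upwards [eventually_mem_nhdsWithin] with s hs
    exact hs.1
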